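/- Energy stability of the semi-implicit scheme: Let (Ω, μ) be a measure space, d ≥ 1, τ > 0 and L ≥ 1. Let φ : [0,∞) → ℝ be convex and continuously differentiable with φ(0) = 0, and let w : [0,∞) → ℝ be positive, nonincreasing and continuous with φ'(r) = r·w(r) for all r ≥ 0. Suppose u⁰, …, u^L are in L²(μ; ℝ) and g⁰, …, g^L are in L²(μ; ℝ^d) with φ(|g^k|) integrable for each k, and suppose that for every k = 1, …, L the tested scheme identity ∫_Ω |d_t u^k|² dμ + ∫_Ω w(|g^{k-1}|) (g^k · d_t g^k) dμ = 0 holds, where d_t c^k = (c^k − c^{k-1})/τ. Then ∫_Ω φ(|g^L|) dμ + τ Σ_{k=1}^L ∫_Ω |d_t u^k|² dμ + (τ²/2) Σ_{k=1}^L ∫_Ω w(|g^{k-1}|) |d_t g^k|² dμ ≤ ∫_Ω φ(|g⁰|) dμ. -/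

import Mathlib

open RealInnerProductSpace MeasureTheory

private lemma key_ineq {φ w : ℝ → ℝ}
    (hderiv : ∀ r ∈ Set.Ici (0:ℝ), HasDerivAt φ (r * w r) r)
    (hwanti : AntitoneOn w (Set.Ici 0))
    {a b : ℝ} (ha : 0 ≤ a) (hb : 0 ≤ b) :
    φ b - φ a ≤ w a / 2 * (b ^ 2 - a ^ 2) := by
  set ψ : ℝ → ℝ := fun r => w a / 2 * r ^ 2 - φ r with hψ
  have hψd : ∀ r ∈ Set.Ici (0:ℝ), HasDerivAt ψ (r * (w a - w r)) r := by
    intro r hr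
    have h1 : HasDerivAt (fun s : ℝ => w a / 2 * s ^ 2) (w a / 2 * (2 * r ^ 1)) r :=
      (hasDerivAt_pow 2 r).const_mul (w a / 2)
    have := h1.sub (hderiv r hr)
    exact this.congr_deriv (by ring)
  have key : ψ a ≤ ψ b := by
    rcases le_total a b with hab | hab
    · have hmono : MonotoneOn ψ (Set.Icc a b) := by
        apply monotoneOn_of_deriv_nonneg (convex_Icc a b)
        · intro r hr
          exact (hψd r (le_trans ha hr.1)).continuousAt.continuousWithinAt
        · intro r hr
          rw [interior_Icc] at hr
          exact (hψd r (le_trans ha hr.1.le)).differentiableAt.differentiableWithinAt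
        · intro r hr
          rw [interior_Icc] at hr
          rw [(hψd r (le_trans ha hr.1.le)).deriv]
          have hr0 : (0:ℝ) ≤ r := le_trans ha hr.1.le
          have : w r ≤ w a := hwanti (Set.mem_Ici.mpr ha) (Set.mem_Ici.mpr hr0) hr.1.le
          nlinarith
      exact hmono (Set.left_mem_Icc.mpr hab) (Set.right_mem_Icc.mpr hab) hab
    · have hanti : AntitoneOn ψ (Set.Icc b a) := by
        apply antitoneOn_of_deriv_nonpos (convex_Icc b a)
        · intro r hr
          exact (hψd r (le_trans hb hr.1)).continuousAt.continuousWithinAt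
        · intro r hr
          rw [interior_Icc] at hr
          exact (hψd r (le_trans hb hr.1.le)).differentiableAt.differentiableWithinAt
        · intro r hr
          rw [interior_Icc] at hr
          rw [(hψd r (le_trans hb hr.1.le)).deriv]
          have hr0 : (0:ℝ) ≤ r := le_trans hb hr.1.le
          have : w a ≤ w r := hwanti (Set.mem_Ici.mpr hr0) (Set.mem_Ici.mpr ha) hr.2.le
          nlinarith
      exact hanti (Set.left_mem_Icc.mpr hab) (Set.right_mem_Icc.mpr hab) hab
  simp only [hψ] at key
  linarith

private lemma aux_int_mul {Ω : Type*} [MeasurableSpace Ω] {μ : Measure Ω}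
    {f h : Ω → ℝ} (hf : MemLp f 2 μ) (hh : MemLp h 2 μ) :
    Integrable (fun x => f x * h x) μ := by
  have := hh.smul (φ := f) hf (p := 2) (q := 2) (r := 1)
  exact memLp_one_iff_integrable.mp this

/-- Energy stability of the semi-implicit scheme (Proposition 3.3): if the tested
scheme identity `∫ |d_t u^k|² + ∫ w(|g^{k-1}|) g^k · d_t g^k = 0` holds for
`k = 1, …, L`, then
`∫ φ(|g^L|) + τ ∑ ∫ |d_t u^k|² + (τ²/2) ∑ ∫ w(|g^{k-1}|)|d_t g^k|² ≤ ∫ φ(|g⁰|)`. -/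
theorem stmt2 {Ω : Type*} [MeasurableSpace Ω] (μ : Measure Ω)
    (d : ℕ) (hd : 1 ≤ d) (τ : ℝ) (hτ : 0 < τ) (L : ℕ) (hL : 1 ≤ L)
    (φ w : ℝ → ℝ)
    (hconv : ConvexOn ℝ (Set.Ici 0) φ)
    (hφ0 : φ 0 = 0)
    (hderiv : ∀ r ∈ Set.Ici (0:ℝ), HasDerivAt φ (r * w r) r)
    (hwpos : ∀ r ∈ Set.Ici (0:ℝ), 0 < w r)
    (hwanti : AntitoneOn w (Set.Ici 0))
    (hwcont : ContinuousOn w (Set.Ici 0))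
    (u : ℕ → Ω → ℝ) (g : ℕ → Ω → EuclideanSpace ℝ (Fin d))
    (hu : ∀ k ≤ L, MemLp (u k) 2 μ)
    (hg : ∀ k ≤ L, MemLp (g k) 2 μ)
    (hφg : ∀ k ≤ L, Integrable (fun x => φ ‖g k x‖) μ)
    (hscheme : ∀ k, 1 ≤ k → k ≤ L →
      (∫ x, ((u k x - u (k-1) x) / τ)^2 ∂μ)
        + ∫ x, w ‖g (k-1) x‖ * ⟪g k x, (1/τ) • (g k x - g (k-1) x)⟫ ∂μ = 0) :
    (∫ x, φ ‖g L x‖ ∂μ)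
      + τ * ∑ k ∈ Finset.Icc 1 L, ∫ x, ((u k x - u (k-1) x) / τ)^2 ∂μ
      + (τ^2 / 2) * ∑ k ∈ Finset.Icc 1 L,
          ∫ x, w ‖g (k-1) x‖ * ‖(1/τ) • (g k x - g (k-1) x)‖^2 ∂μ
    ≤ ∫ x, φ ‖g 0 x‖ ∂μ := by
  -- abbreviations
  set A : ℕ → ℝ := fun k => ∫ x, φ ‖g k x‖ ∂μ with hA
  set D : ℕ → ℝ := fun k => ∫ x, ((u k x - u (k-1) x) / τ)^2 ∂μ with hD
  set C : ℕ → ℝ := fun k =>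
    ∫ x, w ‖g (k-1) x‖ * ‖(1/τ) • (g k x - g (k-1) x)‖^2 ∂μ with hC
  -- per-step estimate
  have hstep : ∀ k ∈ Finset.Icc 1 L, A k - A (k-1) + τ * D k + (τ^2/2) * C k ≤ 0 := by
    intro k hk
    rw [Finset.mem_Icc] at hk
    obtain ⟨hk1, hkL⟩ := hk
    have hgk := hg k hkL
    have hgk1 := hg (k-1) (le_trans (Nat.sub_le k 1) hkL)
    have hdg : MemLp (fun x => (1/τ) • (g k x - g (k-1) x)) 2 μ :=
      (hgk.sub hgk1).const_smul (1/τ)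
    -- measurability and boundedness of the weight
    have hwmax : Continuous fun r : ℝ => w (max r 0) :=
      hwcont.comp_continuous (continuous_id.max continuous_const) (fun r => le_max_right r 0)
    have hWmeas : AEStronglyMeasurable (fun x => w ‖g (k-1) x‖) μ := by
      have := hwmax.comp_aestronglyMeasurable hgk1.aestronglyMeasurable.norm
      simpa [max_eq_left (norm_nonneg _)] using this
    have hWbdd : ∃ Cb, ∀ x, ‖w ‖g (k-1) x‖‖ ≤ Cb := by
      refine ⟨w 0, fun x => ?_⟩
      rw [Real.norm_eq_abs, abs_of_pos (hwpos _ (Set.mem_Ici.mpr (norm_nonneg _)))]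
      exact hwanti (Set.mem_Ici.mpr le_rfl) (Set.mem_Ici.mpr (norm_nonneg _)) (norm_nonneg _)
    -- integrability facts
    have int1 : Integrable
        (fun x => w ‖g (k-1) x‖ * ⟪g k x, (1/τ) • (g k x - g (k-1) x)⟫) μ := by
      have hprod : Integrable (fun x => ‖g k x‖ * ‖(1/τ) • (g k x - g (k-1) x)‖) μ :=
        aux_int_mul hgk.norm hdg.norm
      have hinner : Integrable (fun x => ⟪g k x, (1/τ) • (g k x - g (k-1) x)⟫) μ := by
        refine hprod.mono' (hgk.aestronglyMeasurable.inner hdg.aestronglyMeasurable)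
          (Filter.Eventually.of_forall fun x => ?_)
        rw [Real.norm_eq_abs]
        exact abs_real_inner_le_norm _ _
      exact hinner.bdd_mul hWmeas (Filter.Eventually.of_forall hWbdd.choose_spec)
    have int2 : Integrable
        (fun x => w ‖g (k-1) x‖ * ‖(1/τ) • (g k x - g (k-1) x)‖^2) μ := by
      have hsq : Integrable (fun x => ‖(1/τ) • (g k x - g (k-1) x)‖^2) μ := by
        have := aux_int_mul hdg.norm hdg.norm
        simpa [pow_two] using this
      exact hsq.bdd_mul hWmeas (Filter.Eventually.of_forall hWbdd.choose_spec)
    -- pointwise inequality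
    have hpt : ∀ x,
        φ ‖g k x‖ + (τ^2/2) * (w ‖g (k-1) x‖ * ‖(1/τ) • (g k x - g (k-1) x)‖^2)
          ≤ φ ‖g (k-1) x‖
            + τ * (w ‖g (k-1) x‖ * ⟪g k x, (1/τ) • (g k x - g (k-1) x)⟫) := by
      intro x
      have key := key_ineq hderiv hwanti (norm_nonneg (g (k-1) x)) (norm_nonneg (g k x))
      have h1 : τ * (w ‖g (k-1) x‖ * ⟪g k x, (1/τ) • (g k x - g (k-1) x)⟫)
          = w ‖g (k-1) x‖ * (‖g k x‖^2 - ⟪g k x, g (k-1) x⟫) := by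
        rw [real_inner_smul_right, inner_sub_right, real_inner_self_eq_norm_sq]
        field_simp
      have h2 : (τ^2/2) * (w ‖g (k-1) x‖ * ‖(1/τ) • (g k x - g (k-1) x)‖^2)
          = w ‖g (k-1) x‖
            * (‖g k x‖^2 - 2 * ⟪g k x, g (k-1) x⟫ + ‖g (k-1) x‖^2) / 2 := by
        rw [norm_smul, mul_pow, ← norm_sub_sq_real, Real.norm_eq_abs,
          abs_of_pos (one_div_pos.mpr hτ)]
        field_simp
      have expand :
          w ‖g (k-1) x‖ * (‖g k x‖^2 - ⟪g k x, g (k-1) x⟫)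
            - w ‖g (k-1) x‖
              * (‖g k x‖^2 - 2 * ⟪g k x, g (k-1) x⟫ + ‖g (k-1) x‖^2) / 2
          = w ‖g (k-1) x‖ / 2 * (‖g k x‖^2 - ‖g (k-1) x‖^2) := by ring
      linarith [key, h1, h2, expand,
        le_of_eq h1]
    -- integrate the pointwise inequality
    have hint :
        A k + (τ^2/2) * C k
          ≤ A (k-1)
            + τ * ∫ x, w ‖g (k-1) x‖ * ⟪g k x, (1/τ) • (g k x - g (k-1) x)⟫ ∂μ := by
      have hL1 : Integrable (fun x =>
          φ ‖g k x‖ + (τ^2/2) * (w ‖g (k-1) x‖ * ‖(1/τ) • (g k x - g (k-1) x)‖^2)) μ :=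
        (hφg k hkL).add (int2.const_mul _)
      have hR1 : Integrable (fun x =>
          φ ‖g (k-1) x‖
            + τ * (w ‖g (k-1) x‖ * ⟪g k x, (1/τ) • (g k x - g (k-1) x)⟫)) μ :=
        (hφg (k-1) (le_trans (Nat.sub_le k 1) hkL)).add (int1.const_mul _)
      have := integral_mono hL1 hR1 hpt
      rw [integral_add (hφg k hkL) (int2.const_mul _),
        integral_add (hφg (k-1) (le_trans (Nat.sub_le k 1) hkL)) (int1.const_mul _),
        integral_const_mul, integral_const_mul] at this
      exact this
    have hsch := hscheme k hk1 hkL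
    have hB : (∫ x, w ‖g (k-1) x‖ * ⟪g k x, (1/τ) • (g k x - g (k-1) x)⟫ ∂μ)
        = - D k := by
      simp only [hD]
      linarith [hsch]
    rw [hB] at hint
    simp only [hA, hC] at hint ⊢
    linarith [hint]
  -- sum up
  have hsum := Finset.sum_nonpos hstep
  rw [Finset.sum_add_distrib, Finset.sum_add_distrib, ← Finset.mul_sum, ← Finset.mul_sum]
    at hsum
  have htel : ∑ k ∈ Finset.Icc 1 L, (A k - A (k-1)) = A L - A 0 := by
    rw [← Finset.Ico_add_one_right_eq_Icc, Finset.sum_Ico_eq_sum_range]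
    have hL' : L + 1 - 1 = L := by omega
    rw [hL']
    have h : ∀ i, A (1 + i) - A (1 + i - 1) = A (i + 1) - A i := by
      intro i
      have e1 : 1 + i = i + 1 := by omega
      rw [e1, Nat.add_sub_cancel]
    rw [Finset.sum_congr rfl fun i _ => h i]
    exact Finset.sum_range_sub A L
  rw [htel] at hsum
  linarith [hsum]
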